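/- With the action G^-(i - 1/2) = (ell + 1 - i) Psi^-(i - 1/2) + sum_{n>=1} chi_{-n} Psi^-(n + i - 1/2) on F and Omega_ell = Psi^+(-ell-1/2)...Psi^+(-3/2) 1, if S_ell(-chi_{-1}, ..., -chi_{-ell}) = 0 then the vector w = G^-(3/2) G^-(5/2) ... G^-(ell - 1/2) Omega_ell satisfies G^-(n - 1/2) w = 0 for all integers n >= 1, and w is nonzero, having the form w = (-1)^{ell-1}(ell-1)! Psi^+(-ell - 1/2) 1 + a_1 Psi^+(-ell + 1/2) 1 + ... + a_{ell-1} Psi^+(-3/2) 1 for some complex numbers a_i. -/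

import Mathlib

noncomputable def schurA : PowerSeries (MvPolynomial ℕ ℚ) :=
  PowerSeries.mk fun n => if n = 0 then 0 else MvPolynomial.C ((n : ℚ)⁻¹) * MvPolynomial.X n

/-- `S` is the family of Schur polynomials, i.e. the coefficients of the formal power
series `exp (∑_{n≥1} (x_n/n) yⁿ) = ∑_r S_r yʳ`.  Since `schurA` has zero constant term,
the coefficient of `yʳ` in its exponential is the finite sum
`∑_{k≤r} (1/k!) · [yʳ] (schurA ^ k)`. -/
def IsSchurFamily (S : ℕ → MvPolynomial ℕ ℚ) : Prop :=
  ∀ r : ℕ, S r = ∑ k ∈ Finset.range (r + 1),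
    ((k.factorial : ℚ)⁻¹) • PowerSeries.coeff (R := MvPolynomial ℕ ℚ) r (schurA ^ k)

/-- The fermionic Fock space `F` for the Clifford algebra `CL`:
`ψp n` is `Ψ⁺(n + 1/2)` and `ψm n` is `Ψ⁻(n + 1/2)` for `n : ℤ`. -/
structure CliffordFock (V : Type) [AddCommGroup V] [Module ℂ V] where
  ψp : ℤ → Module.End ℂ V
  ψm : ℤ → Module.End ℂ V
  vac : V
  anti_pm : ∀ r s : ℤ, ψp r * ψm s + ψm s * ψp r = if r + s + 1 = 0 then 1 else 0
  anti_pp : ∀ r s : ℤ, ψp r * ψp s + ψp s * ψp r = 0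
  anti_mm : ∀ r s : ℤ, ψm r * ψm s + ψm s * ψm r = 0
  vac_p : ∀ n : ℤ, 0 ≤ n → ψp n vac = 0
  vac_m : ∀ n : ℤ, 0 ≤ n → ψm n vac = 0
  basis : Module.Basis (Finset ℕ × Finset ℕ) ℂ V
  basis_eq : ∀ A B : Finset ℕ,
    basis (A, B) =
      ((((A.sort (· ≤ ·)).reverse.map fun n => ψm (-(n + 1 : ℤ))).prod *
        ((B.sort (· ≤ ·)).reverse.map fun n => ψp (-(n + 1 : ℤ))).prod) vac)

variable {V : Type} [AddCommGroup V] [Module ℂ V]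

/-- `Ω_s = Ψ⁺(-s-1/2) Ψ⁺(-s+1/2) ⋯ Ψ⁺(-3/2) |0⟩`. -/
noncomputable def CliffordFock.Omega (M : CliffordFock V) (s : ℕ) : V :=
  (((List.range' 1 s).reverse.map fun n => M.ψp (-(n + 1 : ℤ))).prod) M.vac

/-- `Gm i` is the operator `G⁻(i - 1/2) = (ℓ + 1 - i) Ψ⁻(i - 1/2) + ∑_{n ≥ 1} χ_{-n} Ψ⁻(n + i - 1/2)`,
encoded by truncations (on each fixed vector the sum stabilizes). -/
def IsGmFamily (M : CliffordFock V) (ℓ : ℤ) (χ : ℕ → ℂ) (Gm : ℤ → Module.End ℂ V) : Prop :=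
  ∀ (i : ℤ) (v : V), ∃ N : ℕ, ∀ N' : ℕ, N ≤ N' →
    Gm i v = ((ℓ + 1 - i : ℤ) : ℂ) • M.ψm (i - 1) v +
      ∑ n ∈ Finset.Icc 1 N', χ n • M.ψm ((n : ℤ) + i - 1) v

open Finset PowerSeries

abbrev Rq := MvPolynomial ℕ ℚ

lemma coeff_schurA_pow_eq_zero : ∀ {k n : ℕ}, n < k → coeff (R := Rq) n (schurA ^ k) = 0 := by
  intro k
  induction k with
  | zero => omega
  | succ k ih =>
    intro n hn
    rw [pow_succ, coeff_mul]
    apply Finset.sum_eq_zero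
    rintro ⟨i, j⟩ hij
    rw [Finset.HasAntidiagonal.mem_antidiagonal] at hij
    by_cases hj : j = 0
    · have : coeff (R := Rq) 0 schurA = 0 := by simp [schurA]
      subst hj; rw [this, mul_zero]
    · have : coeff (R := Rq) i (schurA ^ k) = 0 := ih (by omega)
      rw [this, zero_mul]

lemma coeff_deriv_schurA (m : ℕ) :
    coeff (R := Rq) m (PowerSeries.derivative Rq schurA) = MvPolynomial.X (m + 1) := by
  rw [PowerSeries.coeff_derivative]
  simp only [schurA, coeff_mk, if_neg (Nat.succ_ne_zero m)]
  rw [mul_assoc]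
  have h1 : (MvPolynomial.X (m+1) : Rq) * ((m : Rq) + 1) = MvPolynomial.C ((m:ℚ)+1) * MvPolynomial.X (m+1) := by
    rw [mul_comm]; congr 1; push_cast; simp
  rw [h1, ← mul_assoc, ← MvPolynomial.C_mul]
  rw [show ((((m:ℕ)+1 : ℕ)):ℚ)⁻¹ * ((m:ℚ)+1) = 1 by push_cast; field_simp]
  simp

lemma schur_rec (S : ℕ → MvPolynomial ℕ ℚ) (hS : IsSchurFamily S) (r : ℕ) :
    S (r+1) * ((r : Rq) + 1) = ∑ i ∈ range (r+1), S i * MvPolynomial.X (r + 1 - i) := by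
  have key : ∀ k : ℕ, coeff (R := Rq) (r+1) (schurA ^ (k+1)) * ((r:Rq)+1)
      = (k+1) • coeff (R := Rq) r (schurA ^ k * PowerSeries.derivative Rq schurA) := by
    intro k
    rw [← PowerSeries.coeff_derivative]
    rw [Derivation.leibniz_pow]
    simp only [Nat.add_sub_cancel, smul_eq_mul]
    rw [map_nsmul]
  -- LHS
  have lhs : S (r+1) * ((r:Rq)+1)
      = ∑ k ∈ range (r+1), (k.factorial : ℚ)⁻¹ • coeff (R := Rq) r (schurA ^ k * PowerSeries.derivative Rq schurA) := by
    rw [hS (r+1), Finset.sum_mul]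
    rw [Finset.sum_range_succ' _ (r+1)]
    have h0 : ((0:ℕ).factorial : ℚ)⁻¹ • coeff (R := Rq) (r+1) (schurA ^ 0) * ((r:Rq)+1) = 0 := by
      simp [PowerSeries.coeff_one]
    rw [h0, add_zero]
    apply Finset.sum_congr rfl
    intro k _
    rw [smul_mul_assoc, key k]
    rw [← Nat.cast_smul_eq_nsmul ℚ (k+1), smul_smul]
    congr 1
    rw [Nat.factorial_succ]
    push_cast
    have hk : ((k.factorial : ℚ)) ≠ 0 := Nat.cast_ne_zero.2 k.factorial_ne_zero
    field_simp
  rw [lhs]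
  -- RHS
  have rhs : ∀ i ∈ range (r+1), S i * MvPolynomial.X (r+1-i)
      = ∑ k ∈ range (r+1), (k.factorial : ℚ)⁻¹ • (coeff (R := Rq) i (schurA ^ k) * coeff (R := Rq) (r-i) (PowerSeries.derivative Rq schurA)) := by
    intro i hi
    rw [mem_range] at hi
    rw [hS i, Finset.sum_mul]
    rw [show r + 1 - i = (r - i) + 1 by omega, ← coeff_deriv_schurA (r-i)]
    have hsub : range (i+1) ⊆ range (r+1) := by
      apply Finset.range_subset_range.2; omega
    rw [← Finset.sum_subset hsub]
    · apply Finset.sum_congr rfl; intro k _; rw [smul_mul_assoc]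
    · intro k _ hk
      rw [mem_range, not_lt] at hk
      rw [coeff_schurA_pow_eq_zero (by omega)]; simp
  rw [Finset.sum_congr rfl rhs, Finset.sum_comm]
  apply Finset.sum_congr rfl
  intro k _
  rw [← Finset.smul_sum]
  congr 1
  rw [coeff_mul, Finset.Nat.sum_antidiagonal_eq_sum_range_succ_mk]


namespace CliffordFock
variable {V : Type} [AddCommGroup V] [Module ℂ V] (M : CliffordFock V)

lemma psm_psp (m r : ℤ) (v : V) :
    M.ψm m (M.ψp r v) = (if r + m + 1 = 0 then v else 0) - M.ψp r (M.ψm m v) := by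
  have h2 := congrArg (fun f : Module.End ℂ V => f v) (M.anti_pm r m)
  simp only [LinearMap.add_apply, Module.End.mul_apply] at h2
  rw [apply_ite (fun f : Module.End ℂ V => f v)] at h2
  simp only [Module.End.one_apply, LinearMap.zero_apply] at h2
  exact eq_sub_of_add_eq' h2

lemma Omega_zero : M.Omega 0 = M.vac := by simp [CliffordFock.Omega]

lemma Omega_succ (k : ℕ) : M.Omega (k+1) = M.ψp (-((k:ℤ)+2)) (M.Omega k) := by
  unfold CliffordFock.Omega
  simp only [bind_pure_comp, List.map_eq_map, List.map_map]
  have h : List.range' 1 (k+1) = List.range' 1 k ++ [k+1] := by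
    rw [List.range'_concat]; norm_num [Nat.add_comm]
  rw [h, List.reverse_append]
  simp only [List.reverse_singleton, List.singleton_append, List.map_cons, List.prod_cons,
    Module.End.mul_apply, Function.comp_apply, Function.comp_def]
  have h2 : -(((k+1:ℕ):ℤ)+1) = -((k:ℤ)+2) := by push_cast; ring
  rw [h2]

lemma psm_Omega : ∀ (k : ℕ) (m : ℤ), (k:ℤ) ≤ m → 0 ≤ m →
    M.ψm m (M.Omega k) = if (1:ℤ) ≤ (k:ℤ) ∧ m = (k:ℤ) then M.Omega (k-1) else 0 := by
  intro k
  induction k with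
  | zero =>
    intro m _ h0
    rw [Omega_zero, M.vac_m m h0, if_neg (by omega)]
  | succ k ih =>
    intro m hm h0
    rw [Omega_succ, psm_psp]
    rw [ih m (by omega) h0]
    rw [if_neg (show ¬((1:ℤ) ≤ (k:ℤ) ∧ m = (k:ℤ)) by omega), map_zero, sub_zero]
    by_cases hc : m = (k:ℤ)+1
    · rw [if_pos (by omega), if_pos (by push_cast; omega)]
      simp
    · rw [if_neg (by omega), if_neg (by push_cast; omega)]

lemma psm_Omega_gt (k : ℕ) (m : ℤ) (h : (k:ℤ) < m) : M.ψm m (M.Omega k) = 0 := by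
  rw [M.psm_Omega k m (by omega) (by omega), if_neg (by omega)]

lemma psm_Omega_self (k : ℕ) (hk : 1 ≤ k) : M.ψm (k:ℤ) (M.Omega k) = M.Omega (k-1) := by
  rw [M.psm_Omega k k le_rfl (by omega), if_pos (by omega)]

/-- `Pvec s k = ψ⁺(-s-1/2) Ω_k`. -/
noncomputable def Pvec (s k : ℕ) : V := M.ψp (-((s:ℤ)+1)) (M.Omega k)

lemma Omega_eq_Pvec (k : ℕ) (hk : 1 ≤ k) : M.Omega k = M.Pvec k (k-1) := by
  obtain ⟨k', rfl⟩ : ∃ k', k = k' + 1 := ⟨k-1, by omega⟩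
  rw [Omega_succ, Pvec]
  norm_num
  congr 2
  push_cast; ring

lemma psm_Pvec_high (s k : ℕ) (m : ℤ) (h : (k:ℤ) < m) :
    M.ψm m (M.Pvec s k) = if m = (s:ℤ) then M.Omega k else 0 := by
  rw [Pvec, psm_psp, M.psm_Omega_gt k m h, map_zero, sub_zero]
  by_cases hc : m = (s:ℤ)
  · rw [if_pos (by omega), if_pos hc]
  · rw [if_neg (by omega), if_neg hc]

lemma psm_Pvec0 (s : ℕ) (m : ℤ) (hm : 0 ≤ m) :
    M.ψm m (M.Pvec s 0) = if m = (s:ℤ) then M.vac else 0 := by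
  rw [Pvec, psm_psp, Omega_zero, M.vac_m m hm, map_zero, sub_zero]
  by_cases hc : m = (s:ℤ)
  · rw [if_pos (by omega), if_pos hc]
  · rw [if_neg (by omega), if_neg hc]

lemma psm_Pvec_self (s k : ℕ) (hk : 1 ≤ k) (hs : k < s) :
    M.ψm (k:ℤ) (M.Pvec s k) = -(M.Pvec s (k-1)) := by
  rw [Pvec, psm_psp, if_neg (by omega), M.psm_Omega_self k hk, zero_sub, Pvec]

end CliffordFock


section ScField
open Finset

lemma Sc_zero (S : ℕ → MvPolynomial ℕ ℚ) (hS : IsSchurFamily S) (χ : ℕ → ℂ) :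
    MvPolynomial.aeval (fun n : ℕ => -χ n) (S 0) = 1 := by
  rw [hS 0]
  simp

lemma Sc_rec (S : ℕ → MvPolynomial ℕ ℚ) (hS : IsSchurFamily S) (χ : ℕ → ℂ) (r : ℕ) :
    ∑ j ∈ range r, χ (r - j) * MvPolynomial.aeval (fun n : ℕ => -χ n) (S j)
      = -(r:ℂ) * MvPolynomial.aeval (fun n : ℕ => -χ n) (S r) := by
  cases r with
  | zero => simp
  | succ r =>
    have h := congrArg (MvPolynomial.aeval (fun n : ℕ => -χ n)) (schur_rec S hS r)
    rw [map_mul, map_sum] at h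
    simp only [map_mul, MvPolynomial.aeval_X, map_add, map_natCast, map_one] at h
    have : ∑ j ∈ range (r+1), χ (r + 1 - j) * MvPolynomial.aeval (fun n : ℕ => -χ n) (S j)
        = -(∑ i ∈ range (r+1), MvPolynomial.aeval (fun n : ℕ => -χ n) (S i) * -χ (r + 1 - i)) := by
      rw [← Finset.sum_neg_distrib]
      apply Finset.sum_congr rfl
      intro i _
      ring
    rw [this, ← h]
    push_cast
    ring

end ScField

namespace CliffordFock
open Finset
variable {V : Type} [AddCommGroup V] [Module ℂ V] (M : CliffordFock V)

lemma Gm_Pvec {ℓ : ℕ} {χ : ℕ → ℂ} {Gm : ℤ → Module.End ℂ V}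
    (hGm : IsGmFamily M (ℓ:ℤ) χ Gm) (s k : ℕ) (hk : 1 ≤ k) (hs : k < s) :
    Gm ((k:ℤ)+1) (M.Pvec s k)
      = (((ℓ:ℤ) - (k:ℤ)) : ℂ) • (-(M.Pvec s (k-1))) + χ (s-k) • M.Omega k := by
  obtain ⟨N, hN⟩ := hGm ((k:ℤ)+1) (M.Pvec s k)
  rw [hN (max N s) (le_max_left _ _)]
  have e1 : (k:ℤ)+1-1 = (k:ℤ) := by ring
  rw [e1, M.psm_Pvec_self s k hk hs]
  have e2 : ((ℓ:ℤ) + 1 - ((k:ℤ)+1)) = (ℓ:ℤ) - (k:ℤ) := by ring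
  rw [e2, smul_neg, ← smul_neg]
  congr 1
  · norm_cast
  rw [Finset.sum_eq_single_of_mem (s-k) (by rw [Finset.mem_Icc]; constructor <;> [omega; exact le_max_of_le_right (by omega)])]
  · have e3 : ((s-k:ℕ):ℤ) + ((k:ℤ)+1) - 1 = (s:ℤ) := by omega
    rw [e3, M.psm_Pvec_high s k (s:ℤ) (by omega), if_pos rfl]
  · intro b hb hbne
    rw [Finset.mem_Icc] at hb
    rw [M.psm_Pvec_high s k _ (by omega), if_neg (by omega), smul_zero]

/-- intermediate vectors -/
noncomputable def uvecD (Sc : ℕ → ℂ) (ℓ t : ℕ) : V :=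
  ((-1:ℂ)^t * (t.factorial : ℂ)) • ∑ j ∈ Finset.range (t+1), Sc j • M.Pvec (ℓ-j) (ℓ-t-1)

lemma Gm_uvecD {ℓ : ℕ} {χ : ℕ → ℂ} {Gm : ℤ → Module.End ℂ V}
    (hGm : IsGmFamily M (ℓ:ℤ) χ Gm) (Sc : ℕ → ℂ)
    (hrec : ∀ r : ℕ, ∑ j ∈ range r, χ (r-j) * Sc j = -(r:ℂ) * Sc r)
    (t : ℕ) (ht : t + 2 ≤ ℓ) :
    Gm ((ℓ:ℤ) - (t:ℤ)) (M.uvecD Sc ℓ t) = M.uvecD Sc ℓ (t+1) := by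
  set k := ℓ - t - 1 with hkdef
  have hk1 : 1 ≤ k := by omega
  have hcast : (ℓ:ℤ) - (t:ℤ) = (k:ℤ) + 1 := by omega
  rw [hcast, uvecD, map_smul, map_sum]
  have hterm : ∀ j ∈ range (t+1), Gm ((k:ℤ)+1) (Sc j • M.Pvec (ℓ-j) k)
      = Sc j • ((((ℓ:ℤ)-(k:ℤ)) : ℂ) • (-(M.Pvec (ℓ-j) (k-1))) + χ (t+1-j) • M.Omega k) := by
    intro j hj
    rw [mem_range] at hj
    rw [map_smul, M.Gm_Pvec hGm (ℓ-j) k hk1 (by omega),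
      show (ℓ - j) - k = t + 1 - j from by omega]
  rw [Finset.sum_congr rfl hterm]
  have hc : (((ℓ:ℤ)):ℂ) - (((k:ℤ)):ℂ) = ((t:ℂ) + 1) := by
    have h' : ((ℓ:ℤ) - (k:ℤ) : ℤ) = ((t:ℤ)+1) := by omega
    calc (((ℓ:ℤ)):ℂ) - (((k:ℤ)):ℂ) = (((ℓ:ℤ) - (k:ℤ) : ℤ) : ℂ) := by push_cast; ring
      _ = (((t:ℤ)+1 : ℤ):ℂ) := by rw [h']
      _ = (t:ℂ) + 1 := by push_cast; ring
  simp only [hc, smul_add]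
  rw [Finset.sum_add_distrib]
  have hsum2 : ∑ j ∈ range (t+1), Sc j • (χ (t+1-j) • M.Omega k)
      = (-((t:ℂ)+1) * Sc (t+1)) • M.Omega k := by
    simp only [smul_smul]
    rw [← Finset.sum_smul]
    congr 1
    rw [show ∑ j ∈ range (t+1), Sc j * χ (t+1-j) = ∑ j ∈ range (t+1), χ (t+1-j) * Sc j from
      Finset.sum_congr rfl (fun j _ => mul_comm _ _), hrec (t+1)]
    push_cast; ring
  rw [hsum2]
  -- rewrite the target
  conv_rhs => rw [uvecD, show ℓ - (t+1) - 1 = k - 1 from by omega, Finset.sum_range_succ,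
    show ℓ - (t+1) = k from by omega, ← M.Omega_eq_Pvec k hk1]
  rw [smul_add, smul_add, Finset.smul_sum, Finset.smul_sum]
  congr 1
  · apply Finset.sum_congr rfl
    intro j _
    simp only [smul_neg, smul_smul]
    rw [← neg_smul]
    congr 1
    rw [Nat.factorial_succ]
    push_cast
    ring
  · rw [smul_smul, smul_smul, Nat.factorial_succ]
    congr 1
    push_cast
    ring

lemma Pvec_basis (s : ℕ) : M.Pvec s 0 = M.basis (∅, {s}) := by
  rw [M.basis_eq]
  simp only [bind_pure_comp, List.map_eq_map, List.map_map, Finset.sort_empty,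
    Finset.sort_singleton, List.reverse_nil, List.reverse_singleton, List.map_nil,
    List.prod_nil, List.map_cons, List.prod_cons, List.prod_nil, mul_one, one_mul,
    Module.End.mul_apply, Function.comp_apply]
  rw [Pvec, Omega_zero]

end CliffordFock


theorem singular_vector_w (M : CliffordFock V)
    (S : ℕ → MvPolynomial ℕ ℚ) (hS : IsSchurFamily S)
    (ℓ : ℕ) (hℓ : 1 ≤ ℓ) (χ : ℕ → ℂ)
    (Gm : ℤ → Module.End ℂ V) (hGm : IsGmFamily M (ℓ : ℤ) χ Gm)
    (hval : MvPolynomial.aeval (fun n : ℕ => -χ n) (S ℓ) = 0)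
    (w : V) (hw : w = (((List.range' 2 (ℓ - 1)).map Gm).prod) (M.Omega ℓ)) :
    (∀ n : ℤ, 1 ≤ n → Gm n w = 0) ∧ w ≠ 0 ∧
      ∃ a : ℕ → ℂ,
        w = ((-1 : ℂ) ^ (ℓ - 1) * ((ℓ - 1).factorial : ℂ)) • M.ψp (-(ℓ + 1 : ℤ)) M.vac +
          ∑ s ∈ Finset.Icc 1 (ℓ - 1), a s • M.ψp (-(s + 1 : ℤ)) M.vac := by
  classical
  set Sc : ℕ → ℂ := fun j => MvPolynomial.aeval (fun n : ℕ => -χ n) (S j) with hScdef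
  have hrec : ∀ r : ℕ, ∑ j ∈ Finset.range r, χ (r-j) * Sc j = -(r:ℂ) * Sc r :=
    fun r => Sc_rec S hS χ r
  have hSc0 : Sc 0 = 1 := Sc_zero S hS χ
  have hScl : Sc ℓ = 0 := hval
  set Cw : ℂ := (-1:ℂ)^(ℓ-1) * ((ℓ-1).factorial : ℂ) with hCwdef
  have hCw0 : Cw ≠ 0 :=
    mul_ne_zero (pow_ne_zero _ (by norm_num)) (Nat.cast_ne_zero.2 (Nat.factorial_ne_zero _))
  -- Step A : identify w with the explicit vector
  have hu : ∀ t : ℕ, t ≤ ℓ - 1 →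
      (((List.range' (ℓ-t+1) t).map (fun n : ℕ => Gm (n:ℤ))).prod) (M.Omega ℓ)
        = M.uvecD Sc ℓ t := by
    intro t
    induction t with
    | zero =>
      intro _
      simp only [List.range'_zero, List.map_nil, List.prod_nil, Module.End.one_apply]
      rw [CliffordFock.uvecD]
      simp only [pow_zero, Nat.factorial_zero, Nat.cast_one, mul_one, one_smul,
        zero_add, Finset.sum_range_one, Nat.sub_zero]
      rw [hSc0, one_smul, ← M.Omega_eq_Pvec ℓ hℓ]
    | succ t ih =>
      intro ht
      have hl : List.range' (ℓ-(t+1)+1) (t+1) = (ℓ-t) :: List.range' (ℓ-t+1) t := by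
        rw [show ℓ-(t+1)+1 = ℓ-t from by omega, List.range'_succ]
      rw [hl]
      simp only [List.map_cons, List.prod_cons, Module.End.mul_apply]
      rw [ih (by omega), show ((ℓ-t : ℕ):ℤ) = (ℓ:ℤ) - (t:ℤ) from by omega]
      exact M.Gm_uvecD hGm Sc hrec t (by omega)
  have hwu : w = M.uvecD Sc ℓ (ℓ-1) := by
    rw [hw]
    have h2 : ∀ v : V, (((List.range' 2 (ℓ-1)).map Gm).prod) v
        = (((List.range' (ℓ-(ℓ-1)+1) (ℓ-1)).map (fun n : ℕ => Gm (n:ℤ))).prod) v := by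
      intro v
      congr 2
      simp only [bind_pure_comp, List.map_eq_map, List.map_map]
      congr 1
      · congr 1
        omega
    rw [h2]
    exact hu (ℓ-1) le_rfl
  have hwform : w = Cw • ∑ j ∈ Finset.range ℓ, Sc j • M.Pvec (ℓ-j) 0 := by
    rw [hwu, CliffordFock.uvecD, show ℓ - (ℓ-1) - 1 = 0 from by omega,
      show ℓ - 1 + 1 = ℓ from by omega]
  -- Step B : action of the annihilation operators on w
  have hpsm : ∀ q : ℤ, 0 ≤ q → M.ψm q w =
      (Cw * (if 1 ≤ q ∧ q ≤ (ℓ:ℤ) then Sc (ℓ - q.toNat) else 0)) • M.vac := by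
    intro q hq
    rw [hwform, map_smul, map_sum]
    have hterm : ∀ j ∈ Finset.range ℓ, M.ψm q (Sc j • M.Pvec (ℓ-j) 0)
        = Sc j • (if q = ((ℓ-j : ℕ):ℤ) then M.vac else 0) := by
      intro j _
      rw [map_smul, M.psm_Pvec0 (ℓ-j) q hq]
    rw [Finset.sum_congr rfl hterm]
    by_cases hcase : 1 ≤ q ∧ q ≤ (ℓ:ℤ)
    · rw [if_pos hcase,
        Finset.sum_eq_single_of_mem (ℓ - q.toNat) (Finset.mem_range.2 (by omega))]
      · rw [if_pos (show q = ((ℓ-(ℓ - q.toNat):ℕ):ℤ) from by omega), smul_smul]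
      · intro b hb hbne
        rw [Finset.mem_range] at hb
        rw [if_neg (by omega), smul_zero]
    · rw [if_neg hcase]
      have hz : ∀ j ∈ Finset.range ℓ, Sc j • (if q = ((ℓ-j:ℕ):ℤ) then M.vac else 0) = 0 := by
        intro j hj
        rw [Finset.mem_range] at hj
        rw [if_neg (by omega), smul_zero]
      rw [Finset.sum_congr rfl hz, Finset.sum_const_zero, smul_zero, mul_zero, zero_smul]
  have hann : ∀ n : ℤ, 1 ≤ n → Gm n w = 0 := by
    intro n hn
    obtain ⟨nn, rfl⟩ := Int.eq_ofNat_of_zero_le (show (0:ℤ) ≤ n by omega)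
    obtain ⟨N, hN⟩ := hGm (nn:ℤ) w
    rw [hN (N + ℓ) (by omega)]
    rw [hpsm ((nn:ℤ)-1) (by omega)]
    have hterm : ∀ m ∈ Finset.Icc 1 (N+ℓ), χ m • M.ψm ((m:ℤ) + (nn:ℤ) - 1) w
        = (χ m * (Cw * (if 1 ≤ (m:ℤ)+(nn:ℤ)-1 ∧ (m:ℤ)+(nn:ℤ)-1 ≤ (ℓ:ℤ)
            then Sc (ℓ - ((m:ℤ)+(nn:ℤ)-1).toNat) else 0))) • M.vac := by
      intro m hm
      rw [Finset.mem_Icc] at hm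
      rw [hpsm ((m:ℤ)+(nn:ℤ)-1) (by omega), smul_smul]
    rw [Finset.sum_congr rfl hterm, ← Finset.sum_smul, smul_smul, ← add_smul]
    have hinner : (((ℓ:ℤ) + 1 - (nn:ℤ) : ℤ):ℂ)
          * (if 1 ≤ (nn:ℤ)-1 ∧ (nn:ℤ)-1 ≤ (ℓ:ℤ) then Sc (ℓ - ((nn:ℤ)-1).toNat) else 0)
        + ∑ m ∈ Finset.Icc 1 (N+ℓ), χ m * (if 1 ≤ (m:ℤ)+(nn:ℤ)-1 ∧ (m:ℤ)+(nn:ℤ)-1 ≤ (ℓ:ℤ)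
            then Sc (ℓ - ((m:ℤ)+(nn:ℤ)-1).toNat) else 0) = 0 := by
      by_cases hbig : ℓ + 2 ≤ nn
      · rw [if_neg (by omega), mul_zero, zero_add]
        apply Finset.sum_eq_zero
        intro m hm
        rw [Finset.mem_Icc] at hm
        rw [if_neg (by omega), mul_zero]
      · set r : ℕ := ℓ + 1 - nn with hrdef
        have hA : (((ℓ:ℤ) + 1 - (nn:ℤ) : ℤ):ℂ)
            * (if 1 ≤ (nn:ℤ)-1 ∧ (nn:ℤ)-1 ≤ (ℓ:ℤ) then Sc (ℓ - ((nn:ℤ)-1).toNat) else 0)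
            = (r:ℂ) * Sc r := by
          by_cases h1 : nn = 1
          · subst h1
            rw [if_neg (by omega), mul_zero, show r = ℓ from by omega, hScl, mul_zero]
          · rw [if_pos (by omega), show ℓ - ((nn:ℤ)-1).toNat = r from by omega,
              show ((ℓ:ℤ) + 1 - (nn:ℤ)) = ((r:ℕ):ℤ) from by omega, Int.cast_natCast]
        have hB : ∑ m ∈ Finset.Icc 1 (N+ℓ), χ m * (if 1 ≤ (m:ℤ)+(nn:ℤ)-1 ∧ (m:ℤ)+(nn:ℤ)-1 ≤ (ℓ:ℤ)
              then Sc (ℓ - ((m:ℤ)+(nn:ℤ)-1).toNat) else 0)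
            = ∑ j ∈ Finset.range r, χ (r-j) * Sc j := by
          rw [← Finset.sum_subset (Finset.Icc_subset_Icc le_rfl (by omega : r ≤ N + ℓ))
            (fun m hm hnm => by
              rw [Finset.mem_Icc] at hm hnm
              push_neg at hnm
              rw [if_neg (by omega), mul_zero])]
          apply Finset.sum_nbij' (i := fun m => r - m) (j := fun j => r - j)
          · intro m hm
            rw [Finset.mem_Icc] at hm
            exact Finset.mem_range.2 (by omega)
          · intro j hj
            rw [Finset.mem_range] at hj
            exact Finset.mem_Icc.2 (by omega)
          · intro m hm
            rw [Finset.mem_Icc] at hm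
            omega
          · intro j hj
            rw [Finset.mem_range] at hj
            omega
          · intro m hm
            rw [Finset.mem_Icc] at hm
            rw [if_pos (by omega)]
            congr 1
            · congr 1
              omega
            · congr 1
              omega
        rw [hA, hB, hrec r]
        ring
    have hfac : (((ℓ:ℤ) + 1 - (nn:ℤ) : ℤ):ℂ)
          * (Cw * (if 1 ≤ (nn:ℤ)-1 ∧ (nn:ℤ)-1 ≤ (ℓ:ℤ) then Sc (ℓ - ((nn:ℤ)-1).toNat) else 0))
        + ∑ m ∈ Finset.Icc 1 (N+ℓ), χ m * (Cw * (if 1 ≤ (m:ℤ)+(nn:ℤ)-1 ∧ (m:ℤ)+(nn:ℤ)-1 ≤ (ℓ:ℤ)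
            then Sc (ℓ - ((m:ℤ)+(nn:ℤ)-1).toNat) else 0))
        = Cw * ((((ℓ:ℤ) + 1 - (nn:ℤ) : ℤ):ℂ)
          * (if 1 ≤ (nn:ℤ)-1 ∧ (nn:ℤ)-1 ≤ (ℓ:ℤ) then Sc (ℓ - ((nn:ℤ)-1).toNat) else 0)
        + ∑ m ∈ Finset.Icc 1 (N+ℓ), χ m * (if 1 ≤ (m:ℤ)+(nn:ℤ)-1 ∧ (m:ℤ)+(nn:ℤ)-1 ≤ (ℓ:ℤ)
            then Sc (ℓ - ((m:ℤ)+(nn:ℤ)-1).toNat) else 0)) := by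
      rw [mul_add, Finset.mul_sum]
      congr 1
      · ring
      · exact Finset.sum_congr rfl (fun m _ => by ring)
    rw [hfac, hinner, mul_zero, zero_smul]
  refine ⟨hann, ?_, ?_⟩
  · -- w ≠ 0
    have hwB : w = ∑ j ∈ Finset.range ℓ, (Cw * Sc j) • M.basis (∅, ({ℓ-j} : Finset ℕ)) := by
      rw [hwform, Finset.smul_sum]
      exact Finset.sum_congr rfl (fun j _ => by rw [smul_smul, M.Pvec_basis])
    have hcoef : (M.basis.repr w) (∅, ({ℓ}:Finset ℕ)) = Cw := by
      rw [hwB, map_sum, Finsupp.finset_sum_apply,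
        Finset.sum_eq_single_of_mem 0 (Finset.mem_range.2 (by omega))]
      · rw [map_smul, M.basis.repr_self, Nat.sub_zero, Finsupp.smul_apply,
          Finsupp.single_apply, if_pos rfl, hSc0, smul_eq_mul, mul_one, mul_one]
      · intro b hb hbne
        rw [Finset.mem_range] at hb
        rw [map_smul, M.basis.repr_self, Finsupp.smul_apply, Finsupp.single_apply,
          if_neg (by
            intro hcontra
            apply hbne
            have := (Prod.mk.injEq _ _ _ _).mp hcontra
            have h2 := Finset.singleton_injective this.2
            omega), smul_eq_mul, mul_zero]
    intro h0
    rw [h0, map_zero] at hcoef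
    simp only [Finsupp.coe_zero, Pi.zero_apply] at hcoef
    exact hCw0 hcoef.symm
  · -- the explicit form
    refine ⟨fun s => Cw * Sc (ℓ - s), ?_⟩
    rw [hwform, Finset.smul_sum]
    have hsplit := Finset.sum_range_succ' (fun j => Cw • Sc j • M.Pvec (ℓ-j) 0) (ℓ-1)
    rw [show ℓ - 1 + 1 = ℓ from by omega] at hsplit
    rw [hsplit, add_comm]
    congr 1
    · rw [Nat.sub_zero, hSc0, one_smul, CliffordFock.Pvec, M.Omega_zero]
    · apply Finset.sum_nbij' (i := fun j => ℓ-1-j) (j := fun s => ℓ-1-s)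
      · intro j hj
        rw [Finset.mem_range] at hj
        exact Finset.mem_Icc.2 (by omega)
      · intro s hs
        rw [Finset.mem_Icc] at hs
        exact Finset.mem_range.2 (by omega)
      · intro j hj
        rw [Finset.mem_range] at hj
        omega
      · intro s hs
        rw [Finset.mem_Icc] at hs
        omega
      · intro j hj
        rw [Finset.mem_range] at hj
        simp only [smul_smul, CliffordFock.Pvec, M.Omega_zero]
        rw [show ℓ - (ℓ-1-j) = j + 1 from by omega, show ℓ - (j+1) = ℓ-1-j from by omega]
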